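/- arXiv:2503.00880 — 3 statements merged into one kernel-verified Lean document; each statement's English description precedes it below -/
import Mathlib

section
/- Let T > 0 and a ∈ ℝ, and let F be the hitting-time functional on C([0,T];ℝ). If g ∈ C([0,T];ℝ) does not have a local maximum at the point F(g), then F is continuous at g with respect to the supremum norm; that is, for every ε > 0 there exists δ > 0 such that every g̃ ∈ C([0,T];ℝ) with sup_{t∈[0,T]} |g̃(t) − g(t)| < δ satisfies |F(g̃) − F(g)| < ε. -/
open Set

/-- The hitting-time functional `F(g) = min(inf {t ∈ [0,T] : g(t) ≥ a}, T)`,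
with the convention that the infimum over the empty set is `+∞`
(so that `F(g) = T` when `g` stays strictly below `a` on `[0,T]`). -/
noncomputable def hittingTime (T a : ℝ) (g : ℝ → ℝ) : ℝ :=
  sInf (insert T {t | t ∈ Set.Icc 0 T ∧ a ≤ g t})

/-- `g` has a local maximum at `t₀` (within `[0,T]`). -/
def HasLocalMaxAt (T : ℝ) (g : ℝ → ℝ) (t₀ : ℝ) : Prop :=
  ∃ ε > 0, ∀ s ∈ Set.Icc 0 T, |s - t₀| ≤ ε → g s ≤ g t₀

theorem hittingTime_continuous_at
    (T a : ℝ) (hT : 0 < T)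
    (g : ℝ → ℝ) (hg : ContinuousOn g (Set.Icc 0 T))
    (hmax : ¬ HasLocalMaxAt T g (hittingTime T a g)) :
    ∀ ε > 0, ∃ δ > 0, ∀ g' : ℝ → ℝ, ContinuousOn g' (Set.Icc 0 T) →
      sSup ((fun t => |g' t - g t|) '' Set.Icc 0 T) < δ →
      |hittingTime T a g' - hittingTime T a g| < ε := by
  intro ε hε
  set τ := hittingTime T a g with hτdef
  have hbdd : ∀ g' : ℝ → ℝ, BddBelow (insert T {t | t ∈ Set.Icc 0 T ∧ a ≤ g' t}) := by
    intro g'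
    refine ⟨0, ?_⟩
    rintro t (rfl | ⟨⟨h0, _⟩, _⟩)
    · exact hT.le
    · exact h0
  have hle_T : ∀ g' : ℝ → ℝ, hittingTime T a g' ≤ T :=
    fun g' => csInf_le (hbdd g') (Set.mem_insert _ _)
  have h0le : ∀ g' : ℝ → ℝ, 0 ≤ hittingTime T a g' := by
    intro g'
    apply le_csInf ⟨T, Set.mem_insert _ _⟩
    rintro t (rfl | ⟨⟨h0, _⟩, _⟩)
    · exact hT.le
    · exact h0
  have hlt : ∀ t ∈ Set.Icc 0 T, t < τ → g t < a := by
    intro t ht htlt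
    by_contra h
    push_neg at h
    exact absurd (csInf_le (hbdd g) (Set.mem_insert_of_mem _ ⟨ht, h⟩)) (not_le.mpr htlt)
  have hτmem : τ ∈ Set.Icc 0 T := ⟨h0le g, hle_T g⟩
  have hgea : τ < T → a ≤ g τ := by
    intro hτT
    by_contra h
    push_neg at h
    obtain ⟨η, hη, hball⟩ :=
      Metric.continuousWithinAt_iff.mp (hg τ hτmem) (a - g τ) (by linarith)
    have key : ∀ b ∈ insert T {t | t ∈ Set.Icc 0 T ∧ a ≤ g t}, min T (τ + η) ≤ b := by
      rintro b (rfl | ⟨hbI, hba⟩)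
      · exact min_le_left _ _
      · have hτb : τ ≤ b := csInf_le (hbdd g) (Set.mem_insert_of_mem _ ⟨hbI, hba⟩)
        rcases lt_or_ge b (τ + η) with hb | hb
        · exfalso
          have hd : dist b τ < η := by
            rw [Real.dist_eq, abs_of_nonneg (by linarith)]; linarith
          have h2 := hball hbI hd
          rw [Real.dist_eq] at h2
          have h3 := abs_lt.mp h2
          linarith
        · exact le_trans (min_le_right _ _) hb
    have h4 : min T (τ + η) ≤ τ := le_csInf ⟨T, Set.mem_insert _ _⟩ key
    have hmin : τ < min T (τ + η) := lt_min hτT (by linarith)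
    linarith
  obtain ⟨δ₁, hδ₁, hP₁⟩ : ∃ δ₁ > 0, ∀ g' : ℝ → ℝ,
      (∀ t ∈ Set.Icc 0 T, |g' t - g t| < δ₁) → τ - ε < hittingTime T a g' := by
    rcases lt_or_ge (τ - ε/2) 0 with hc | hc
    · exact ⟨1, one_pos, fun g' _ => lt_of_lt_of_le (by linarith) (h0le g')⟩
    · have hsub : Set.Icc 0 (τ - ε/2) ⊆ Set.Icc 0 T :=
        Set.Icc_subset_Icc le_rfl (by linarith [hle_T g])
      obtain ⟨p, hp, hpmax⟩ :=
        isCompact_Icc.exists_isMaxOn (Set.nonempty_Icc.mpr hc) (hg.mono hsub)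
      have hpa : g p < a := hlt p (hsub hp) (lt_of_le_of_lt hp.2 (by linarith))
      refine ⟨a - g p, by linarith, fun g' hg' => ?_⟩
      have key : ∀ b ∈ insert T {t | t ∈ Set.Icc 0 T ∧ a ≤ g' t}, τ - ε/2 ≤ b := by
        rintro b (rfl | ⟨hbI, hba⟩)
        · linarith [hle_T g]
        · by_contra hb
          push_neg at hb
          have hbc : b ∈ Set.Icc 0 (τ - ε/2) := ⟨hbI.1, hb.le⟩
          have h1 : g b ≤ g p := hpmax hbc
          have h2 := abs_lt.mp (hg' b hbI)
          linarith
      have h5 : τ - ε/2 ≤ hittingTime T a g' := le_csInf ⟨T, Set.mem_insert _ _⟩ key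
      linarith
  obtain ⟨δ₂, hδ₂, hP₂⟩ : ∃ δ₂ > 0, ∀ g' : ℝ → ℝ,
      (∀ t ∈ Set.Icc 0 T, |g' t - g t| < δ₂) → hittingTime T a g' < τ + ε := by
    rcases eq_or_lt_of_le (hle_T g) with hτT | hτT
    · refine ⟨1, one_pos, fun g' _ => lt_of_le_of_lt (hle_T g') ?_⟩
      rw [← hτT]; linarith
    · have hga : a ≤ g τ := hgea hτT
      rw [HasLocalMaxAt] at hmax
      push_neg at hmax
      obtain ⟨s, hsI, hsd, hsgt⟩ := hmax (ε/2) (by linarith)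
      have hsτ : τ < s := by
        rcases lt_or_ge τ s with h | h
        · exact h
        · exfalso
          have hsa : a ≤ g s := le_of_lt (lt_of_le_of_lt hga hsgt)
          have hτs : τ ≤ s := csInf_le (hbdd g) (Set.mem_insert_of_mem _ ⟨hsI, hsa⟩)
          have hse : s = τ := le_antisymm h hτs
          rw [hse] at hsgt
          exact lt_irrefl _ hsgt
      have hsa : a < g s := lt_of_le_of_lt hga hsgt
      refine ⟨g s - a, by linarith, fun g' hg' => ?_⟩
      have h1 := abs_lt.mp (hg' s hsI)
      have h2 : a ≤ g' s := by linarith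
      have h3 : hittingTime T a g' ≤ s :=
        csInf_le (hbdd g') (Set.mem_insert_of_mem _ ⟨hsI, h2⟩)
      have hs2 := abs_le.mp hsd
      linarith
  refine ⟨min δ₁ δ₂, lt_min hδ₁ hδ₂, fun g' hg' hsup => ?_⟩
  have hpt : ∀ t ∈ Set.Icc 0 T, |g' t - g t| < min δ₁ δ₂ := by
    intro t ht
    have hb : BddAbove ((fun t => |g' t - g t|) '' Set.Icc 0 T) :=
      isCompact_Icc.bddAbove_image ((hg'.sub hg).abs)
    exact lt_of_le_of_lt (le_csSup hb (Set.mem_image_of_mem _ ht)) hsup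
  have h1 := hP₁ g' (fun t ht => lt_of_lt_of_le (hpt t ht) (min_le_left _ _))
  have h2 := hP₂ g' (fun t ht => lt_of_lt_of_le (hpt t ht) (min_le_right _ _))
  rw [abs_lt]
  constructor <;> linarith
end

section
/- Let T > 0, let α, β : [0,T] → ℝ be continuous with α(t) ≤ β(t) for all t, let Y : [0,T] → ℝ be continuous, and let A, C : [0,T] → ℝ be continuous nondecreasing functions with A(0) = C(0) = 0. Assume that α(t) ≤ Y(t) ≤ β(t) for all t ∈ [0,T], and that the Skorokhod minimality conditions hold: ∫_{[0,T]} (Y(t) − α(t)) dA(t) = 0 and ∫_{[0,T]} (β(t) − Y(t)) dC(t) = 0, the integrals being taken with respect to the Lebesgue–Stieltjes measures of A and C. For s ∈ [0,T] define x(s) := Y(T−s) + (A(T−s) − A(T)) − (C(T−s) − C(T)), ŷ(s) := Y(T−s), ηˡ(s) := A(T) − A(T−s), and ηᵘ(s) := C(T) − C(T−s). Then ηˡ and ηᵘ are continuous, nondecreasing, vanish at s = 0, and satisfy ŷ(s) = x(s) + ηˡ(s) − ηᵘ(s) and α(T−s) ≤ ŷ(s) ≤ β(T−s) for all s ∈ [0,T],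 together with the Skorokhod minimality conditions ∫_{[0,T]} (ŷ(s) − α(T−s)) dηˡ(s) = 0 and ∫_{[0,T]} (β(T−s) − ŷ(s)) dηᵘ(s) = 0. In other words, the time-reversed pair (ŷ, ηˡ − ηᵘ) solves the Skorokhod problem for x on the time-varying interval [α(T−·), β(T−·)]. -/
open MeasureTheory Set

noncomputable def revSt (T : ℝ) (A : StieltjesFunction ℝ) (hAc : Continuous (A : ℝ → ℝ)) :
    StieltjesFunction ℝ where
  toFun := fun s => A T - A (T - s)
  mono' := fun s s' h => by
    have := A.mono (by linarith : T - s' ≤ T - s); simp; linarith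
  right_continuous' := fun x =>
    ((continuous_const.sub (hAc.comp (continuous_const.sub continuous_id))).continuousAt).continuousWithinAt

lemma leftLim_eq_self (A : StieltjesFunction ℝ) (hAc : Continuous (A : ℝ → ℝ)) (x : ℝ) :
    Function.leftLim (A : ℝ → ℝ) x = A x :=
  leftLim_eq_of_tendsto
    ((hAc.tendsto x).mono_left nhdsWithin_le_nhds)

lemma revSt_measure (T : ℝ) (A : StieltjesFunction ℝ) (hAc : Continuous (A : ℝ → ℝ)) :
    (revSt T A hAc).measure = A.measure.map (fun t => T - t) := by
  refine Measure.ext_of_Ioc _ _ (fun a b hab => ?_)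
  rw [Measure.map_apply (by fun_prop) measurableSet_Ioc]
  have hpre : (fun t => T - t) ⁻¹' Ioc a b = Ico (T - b) (T - a) := by
    ext t; simp only [mem_preimage, mem_Ioc, mem_Ico]
    constructor <;> intro h <;> exact ⟨by linarith [h.1, h.2], by linarith [h.1, h.2]⟩
  rw [hpre, A.measure_Ico, StieltjesFunction.measure_Ioc,
    leftLim_eq_self A hAc, leftLim_eq_self A hAc]
  simp only [revSt]
  ring_nf

lemma revSt_integral (T : ℝ) (A : StieltjesFunction ℝ) (hAc : Continuous (A : ℝ → ℝ))
    (f : ℝ → ℝ) (hf : ContinuousOn f (Icc 0 T)) :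
    ∫ s in Icc 0 T, f (T - s) ∂(revSt T A hAc).measure = ∫ t in Icc 0 T, f t ∂A.measure := by
  have hmapIcc : ∀ s ∈ Icc (0:ℝ) T, T - s ∈ Icc (0:ℝ) T := fun s hs =>
    ⟨by linarith [hs.2], by linarith [hs.1]⟩
  have hg : AEMeasurable (fun t : ℝ => T - t) A.measure := by fun_prop
  have hpre : (fun t : ℝ => T - t) ⁻¹' Icc 0 T = Icc 0 T := by
    ext t; simp only [mem_preimage, mem_Icc]
    constructor <;> intro h <;> exact ⟨by linarith [h.1, h.2], by linarith [h.1, h.2]⟩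
  have hrestr : (A.measure.map (fun t => T - t)).restrict (Icc 0 T)
      = (A.measure.restrict (Icc 0 T)).map (fun t => T - t) := by
    rw [Measure.restrict_map_of_aemeasurable hg measurableSet_Icc, hpre]
  have hfm : AEStronglyMeasurable (fun s => f (T - s))
      ((A.measure.restrict (Icc 0 T)).map (fun t => T - t)) := by
    rw [← hrestr]
    refine ContinuousOn.aestronglyMeasurable ?_ measurableSet_Icc
    exact hf.comp ((continuous_const.sub continuous_id).continuousOn) hmapIcc
  rw [revSt_measure, hrestr, integral_map hg.restrict hfm]
  simp only [sub_sub_cancel]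

/-- Time reversal of a doubly reflected path solves a Skorokhod problem on the
time-varying interval `[α(T-·), β(T-·)]`: given continuous barriers `α ≤ β`, a
continuous path `Y` between the barriers, and continuous nondecreasing reflection
terms `A`, `C` vanishing at `0` that satisfy the Skorokhod minimality conditions
(with respect to their Lebesgue–Stieltjes measures), the functions
`ηˡ(s) = A(T) - A(T-s)` and `ηᵘ(s) = C(T) - C(T-s)` are continuous, nondecreasing,
vanish at `0`, and the reversed path `ŷ(s) = Y(T-s)` satisfies
`ŷ = x + ηˡ - ηᵘ` with `x(s) = Y(T-s) + (A(T-s) - A(T)) - (C(T-s) - C(T))`,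
stays within the reversed barriers, and satisfies the Skorokhod minimality
conditions with respect to the Lebesgue–Stieltjes measures of `ηˡ` and `ηᵘ`. -/
theorem skorokhod_time_reversal
    (T : ℝ) (hT : 0 < T)
    (α β Y : ℝ → ℝ)
    (hα : ContinuousOn α (Icc 0 T)) (hβ : ContinuousOn β (Icc 0 T))
    (hαβ : ∀ t ∈ Icc 0 T, α t ≤ β t)
    (hY : ContinuousOn Y (Icc 0 T))
    (A C : StieltjesFunction ℝ)
    (hAc : Continuous (A : ℝ → ℝ)) (hCc : Continuous (C : ℝ → ℝ))
    (hA0 : A 0 = 0) (hC0 : C 0 = 0)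
    (hbar : ∀ t ∈ Icc 0 T, α t ≤ Y t ∧ Y t ≤ β t)
    (hminA : ∫ t in Icc 0 T, (Y t - α t) ∂A.measure = 0)
    (hminC : ∫ t in Icc 0 T, (β t - Y t) ∂C.measure = 0) :
    ∃ ηl ηu : StieltjesFunction ℝ,
      (∀ s, ηl s = A T - A (T - s)) ∧
      (∀ s, ηu s = C T - C (T - s)) ∧
      Continuous (ηl : ℝ → ℝ) ∧ Continuous (ηu : ℝ → ℝ) ∧
      Monotone (ηl : ℝ → ℝ) ∧ Monotone (ηu : ℝ → ℝ) ∧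
      ηl 0 = 0 ∧ ηu 0 = 0 ∧
      (∀ s ∈ Icc 0 T,
        Y (T - s) =
          (Y (T - s) + (A (T - s) - A T) - (C (T - s) - C T)) + ηl s - ηu s) ∧
      (∀ s ∈ Icc 0 T, α (T - s) ≤ Y (T - s) ∧ Y (T - s) ≤ β (T - s)) ∧
      (∫ s in Icc 0 T, (Y (T - s) - α (T - s)) ∂ηl.measure = 0) ∧
      (∫ s in Icc 0 T, (β (T - s) - Y (T - s)) ∂ηu.measure = 0) := by
  have hmapIcc : ∀ s ∈ Icc (0:ℝ) T, T - s ∈ Icc (0:ℝ) T := fun s hs =>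
    ⟨by linarith [hs.2], by linarith [hs.1]⟩
  refine ⟨revSt T A hAc, revSt T C hCc, fun s => rfl, fun s => rfl, ?_, ?_, ?_, ?_, ?_, ?_, ?_, ?_,
    ?_, ?_⟩
  · exact continuous_const.sub (hAc.comp (continuous_const.sub continuous_id))
  · exact continuous_const.sub (hCc.comp (continuous_const.sub continuous_id))
  · exact (revSt T A hAc).mono
  · exact (revSt T C hCc).mono
  · simp [revSt]
  · simp [revSt]
  · intro s _; simp only [revSt]; ring
  · intro s hs; exact hbar (T - s) (hmapIcc s hs)
  · rw [revSt_integral T A hAc (fun t => Y t - α t) (hY.sub hα)]; exact hminA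
  · rw [revSt_integral T C hCc (fun t => β t - Y t) (hβ.sub hY)]; exact hminC
end

section
/- Let T > 0, let α, β : [0,T] → ℝ be continuous with inf_{t∈[0,T]} (β(t) − α(t)) > 0, let Y : [0,T] → ℝ be continuous, and let A, C : [0,T] → ℝ be continuous nondecreasing with A(0) = C(0) = 0. Assume α(t) ≤ Y(t) ≤ β(t) for all t and that the Skorokhod minimality conditions ∫_{[0,T]} (Y(t) − α(t)) dA(t) = 0 and ∫_{[0,T]} (β(t) − Y(t)) dC(t) = 0 hold, the integrals being with respect to the Lebesgue–Stieltjes measures of A and C. Set K := A − C and, for s ∈ [0,T], define the time-reversed free path x(s) := Y(T−s) + (K(T−s) − K(T)) and the time-reversed barriers α̃(s) := α(T−s), β̃(s) := β(T−s). Define the first boundary-hitting times T_α̃ := inf{s ∈ (0,T] : x(s) ≤ α̃(s)} and T_β̃ := inf{s ∈ (0,T] : x(s) ≥ β̃(s)} (each equal to +∞ if the corresponding set is empty), and the path functionals H(s) := sup_{0≤u≤s} [ (x(u) − β̃(u)) ∧ inf_{u≤r≤s} (x(r) − α̃(r)) ] and L(s) := inf_{0≤u≤s} [ (x(u) − α̃(u))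 ∨ sup_{u≤r≤s} (x(r) − β̃(r)) ]. Then for every s ∈ [0,T], K(T−s) − K(T) = 1_{{T_β̃ < T_α̃}} 1_{{s ≥ T_β̃}} H(s) + 1_{{T_α̃ < T_β̃}} 1_{{s ≥ T_α̃}} L(s). -/
open MeasureTheory Set
open scoped Classical Topology



private lemma ereal_le_sInf {S : Set ℝ} {c : ℝ} (h : ∀ u ∈ S, c ≤ u) :
    (c : EReal) ≤ sInf ((fun s : ℝ => (s : EReal)) '' S) := by
  apply le_sInf
  rintro b ⟨u, hu, rfl⟩
  exact EReal.coe_le_coe_iff.2 (h u hu)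

private lemma miss_lemma {T z : ℝ} {f : ℝ → ℝ} (hf : ContinuousOn f (Icc 0 T))
    (hz : z ∈ Icc 0 T) (hpos : ∀ u ∈ Ioc 0 z, 0 < f u) (h0 : 0 < f z) :
    ∃ δ > 0, ∀ u ∈ {u ∈ Ioc 0 T | f u ≤ 0}, z + δ ≤ u := by
  have hcw : ContinuousWithinAt f (Icc 0 T) z := hf z hz
  have hev : f ⁻¹' (Ioi 0) ∈ 𝓝[Icc 0 T] z := hcw (isOpen_Ioi.mem_nhds h0)
  rw [Metric.mem_nhdsWithin_iff] at hev
  obtain ⟨δ, hδ, hball⟩ := hev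
  refine ⟨δ, hδ, ?_⟩
  rintro u ⟨⟨hu0, huT⟩, hfu⟩
  by_contra hlt
  push_neg at hlt
  have huz : z < u := by
    by_contra h'
    push_neg at h'
    exact absurd (hpos u ⟨hu0, h'⟩) (not_lt.2 hfu)
  have hmem : u ∈ Metric.ball z δ ∩ Icc 0 T := by
    constructor
    · rw [Metric.mem_ball, Real.dist_eq, abs_of_pos (by linarith)]
      linarith
    · exact ⟨le_of_lt hu0, huT⟩
  exact absurd (hball hmem) (not_lt.2 hfu)

private lemma isClosed_sep' {a b : ℝ} {f g : ℝ → ℝ} (hf : ContinuousOn f (Icc a b))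
    (hg : ContinuousOn g (Icc a b)) : IsClosed {u ∈ Icc a b | f u = g u} := by
  have h : {u ∈ Icc a b | f u = g u} = Icc a b ∩ (fun u => f u - g u) ⁻¹' {0} := by
    ext u; simp [sub_eq_zero]
  rw [h]
  exact (hf.sub hg).preimage_isClosed_of_isClosed isClosed_Icc isClosed_singleton

private lemma real_sInf_neg (t : Set ℝ) : sInf (-t) = -sSup t := by
  rw [Real.sInf_def, neg_neg]

private lemma real_sSup_neg (t : Set ℝ) : sSup (-t) = -sInf t := by
  have := Real.sInf_def t
  linarith



private lemma stieltjes_const_of_pos (A : StieltjesFunction ℝ) (hAc : Continuous A)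
    (T : ℝ) (f : ℝ → ℝ) (hf : ContinuousOn f (Icc 0 T))
    (hnn : ∀ t ∈ Icc 0 T, 0 ≤ f t)
    (hint : ∫ t in Icc 0 T, f t ∂A.measure = 0)
    (p q : ℝ) (hp : 0 ≤ p) (hpq : p ≤ q) (hq : q ≤ T)
    (hpos : ∀ t, p < t → t < q → 0 < f t) : A q = A p := by
  by_contra hne
  have hlt : A p < A q := lt_of_le_of_ne (A.mono hpq) (Ne.symm hne)
  have hpq' : p < q := by
    rcases lt_or_eq_of_le hpq with h | h
    · exact h
    · exact absurd (congrArg A h) (fun h' => hne (h'.symm))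
  set d : ℝ := (A q - A p) / 4 with hd
  have hdpos : 0 < d := by simp only [hd]; linarith
  -- pick p'
  have ht1 : Filter.Tendsto A (𝓝[>] p) (𝓝 (A p)) :=
    (hAc.tendsto p).mono_left nhdsWithin_le_nhds
  have h1 : ∀ᶠ t in 𝓝[>] p, A t < A p + d := ht1.eventually_lt_const (by linarith)
  have h2 : Ioo p q ∈ 𝓝[>] p := Ioo_mem_nhdsGT_of_mem ⟨le_rfl, hpq'⟩
  obtain ⟨p', hp'1, hp'2⟩ := (h1.and (Filter.eventually_of_mem h2 (fun t ht => ht))).exists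
  -- pick q'
  have ht2 : Filter.Tendsto A (𝓝[<] q) (𝓝 (A q)) :=
    (hAc.tendsto q).mono_left nhdsWithin_le_nhds
  have h3 : ∀ᶠ t in 𝓝[<] q, A q - d < A t := ht2.eventually_const_lt (by linarith)
  have h4 : Ioo p' q ∈ 𝓝[<] q := Ioo_mem_nhdsLT_of_mem ⟨hp'2.2, le_rfl⟩
  obtain ⟨q', hq'1, hq'2⟩ := (h3.and (Filter.eventually_of_mem h4 (fun t ht => ht))).exists
  have hsub1 : Icc p' q' ⊆ Ioo p q :=
    fun t ht => ⟨lt_of_lt_of_le hp'2.1 ht.1, lt_of_le_of_lt ht.2 hq'2.2⟩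
  have hsub2 : Ioo p q ⊆ Icc 0 T :=
    fun t ht => ⟨le_trans hp (le_of_lt ht.1), le_trans (le_of_lt ht.2) hq⟩
  have hsub : Icc p' q' ⊆ Icc 0 T := fun t ht => hsub2 (hsub1 ht)
  have hne' : (Icc p' q').Nonempty := ⟨p', ⟨le_rfl, le_of_lt hq'2.1⟩⟩
  obtain ⟨t₀, ht₀, hmin⟩ := isCompact_Icc.exists_isMinOn hne' (hf.mono hsub)
  have hε : 0 < f t₀ := hpos t₀ (hsub1 ht₀).1 (hsub1 ht₀).2
  have hint1 : IntegrableOn f (Icc 0 T) A.measure := hf.integrableOn_compact isCompact_Icc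
  have hmono : ∫ t in Icc p' q', f t ∂A.measure ≤ ∫ t in Icc 0 T, f t ∂A.measure := by
    apply setIntegral_mono_set hint1
    · exact (ae_restrict_iff' measurableSet_Icc).2 (Filter.Eventually.of_forall hnn)
    · exact HasSubset.Subset.eventuallyLE hsub
  have hfin : A.measure (Icc p' q') ≠ ⊤ := (isCompact_Icc.measure_lt_top).ne
  have hlow : f t₀ * (A.measure (Icc p' q')).toReal ≤ ∫ t in Icc p' q', f t ∂A.measure := by
    rw [mul_comm, ← measureReal_def, ← smul_eq_mul]
    apply setIntegral_ge_of_const_le measurableSet_Icc hfin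
    · exact fun t ht => hmin ht
    · exact hint1.mono_set hsub
  have hll : Function.leftLim A p' = A p' :=
    leftLim_eq_of_tendsto
      ((hAc.tendsto p').mono_left nhdsWithin_le_nhds)
  have hmeas : (A.measure (Icc p' q')).toReal = A q' - A p' := by
    rw [StieltjesFunction.measure_Icc, hll, ENNReal.toReal_ofReal]
    exact sub_nonneg.2 (A.mono (le_of_lt hq'2.1))
  rw [hmeas] at hlow
  rw [hint] at hmono
  nlinarith [hp'1, hq'1, hε, hlow, hmono]



private lemma keyMain {T s : ℝ} {x k lo hi : ℝ → ℝ}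
    (hs0 : 0 ≤ s) (hsT : s ≤ T)
    (hx : ContinuousOn x (Icc 0 T)) (hk : ContinuousOn k (Icc 0 T))
    (hlo : ContinuousOn lo (Icc 0 T)) (hhi : ContinuousOn hi (Icc 0 T))
    (hP1l : ∀ u ∈ Icc 0 T, lo u ≤ x u - k u)
    (hP1u : ∀ u ∈ Icc 0 T, x u - k u ≤ hi u)
    (hP2 : ∀ p q, 0 ≤ p → p ≤ q → q ≤ T →
      (∀ r, p < r → r < q → lo r < x r - k r) → k p ≤ k q)
    (hP3 : ∀ p q, 0 ≤ p → p ≤ q → q ≤ T →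
      (∀ r, p < r → r < q → x r - k r < hi r) → k q ≤ k p)
    (htouch : ∃ w ∈ Icc 0 s, x w - k w = hi w) :
    sSup ((fun u => min (x u - hi u)
      (sInf ((fun r => x r - lo r) '' Icc u s))) '' Icc 0 s) = k s := by
  have hsub : Icc 0 s ⊆ Icc 0 T := Icc_subset_Icc le_rfl hsT
  have hA : ∀ u ∈ Icc 0 s,
      min (x u - hi u) (sInf ((fun r => x r - lo r) '' Icc u s)) ≤ k s := by
    intro u hu
    by_contra hcon
    push_neg at hcon
    have hsub2 : Icc u s ⊆ Icc 0 T := Icc_subset_Icc hu.1 hsT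
    have h1 : k s < x u - hi u := hcon.trans_le (min_le_left _ _)
    have h2 : k s < sInf ((fun r => x r - lo r) '' Icc u s) :=
      hcon.trans_le (min_le_right _ _)
    have hgc : ContinuousOn (fun r => x r - lo r) (Icc u s) := (hx.sub hlo).mono hsub2
    have hbdd : BddBelow ((fun r => x r - lo r) '' Icc u s) :=
      (isCompact_Icc.image_of_continuousOn hgc).bddBelow
    have h3 : ∀ r ∈ Icc u s, k s < x r - lo r := fun r hr =>
      h2.trans_le (csInf_le hbdd ⟨r, hr, rfl⟩)
    have h4 : k s < k u := by
      have := hP1u u (hsub hu); linarith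
    set R := {r ∈ Icc u s | x r - k r = lo r} with hR
    have hRclosed : IsClosed R := isClosed_sep' ((hx.sub hk).mono hsub2) (hlo.mono hsub2)
    have hRne : R.Nonempty := by
      by_contra hRe
      rw [Set.not_nonempty_iff_eq_empty] at hRe
      have hle : k u ≤ k s := by
        apply hP2 u s hu.1 hu.2 hsT
        intro r hr hr'
        have hrm : r ∈ Icc u s := ⟨le_of_lt hr, le_of_lt hr'⟩
        have hne : x r - k r ≠ lo r := by
          intro heq
          have : r ∈ R := ⟨hrm, heq⟩
          rw [hRe] at this
          exact absurd this (Set.notMem_empty r)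
        exact lt_of_le_of_ne (hP1l r (hsub2 hrm)) (Ne.symm hne)
      linarith
    have hRcomp : IsCompact R := isCompact_Icc.of_isClosed_subset hRclosed (sep_subset _ _)
    obtain ⟨hr₀m, hr₀t⟩ := hRcomp.sSup_mem hRne
    have hk0 : k (sSup R) ≤ k s := by
      apply hP2 (sSup R) s (le_trans hu.1 hr₀m.1) hr₀m.2 hsT
      intro r hr hr'
      have hrm : r ∈ Icc u s := ⟨le_trans hr₀m.1 (le_of_lt hr), le_of_lt hr'⟩
      have hne : x r - k r ≠ lo r := fun heq =>
        absurd (le_csSup hRcomp.bddAbove (⟨hrm, heq⟩ : r ∈ R)) (not_le.2 hr)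
      exact lt_of_le_of_ne (hP1l r (hsub2 hrm)) (Ne.symm hne)
    have := h3 (sSup R) hr₀m
    linarith
  obtain ⟨w, hw, hwt⟩ := htouch
  set R' := {u ∈ Icc 0 s | x u - k u = hi u} with hR'
  have hR'closed : IsClosed R' := isClosed_sep' ((hx.sub hk).mono hsub) (hhi.mono hsub)
  have hR'comp : IsCompact R' := isCompact_Icc.of_isClosed_subset hR'closed (sep_subset _ _)
  have hR'ne : R'.Nonempty := ⟨w, hw, hwt⟩
  obtain ⟨hu₀m, hu₀t⟩ := hR'comp.sSup_mem hR'ne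
  have hks : ∀ r ∈ Icc (sSup R') s, k s ≤ k r := by
    intro r hr
    apply hP3 r s (le_trans hu₀m.1 hr.1) hr.2 hsT
    intro r' hr1 hr2
    have hrm : r' ∈ Icc 0 s := ⟨le_trans (le_trans hu₀m.1 hr.1) (le_of_lt hr1), le_of_lt hr2⟩
    have hne : x r' - k r' ≠ hi r' := fun heq =>
      absurd (le_csSup hR'comp.bddAbove (⟨hrm, heq⟩ : r' ∈ R'))
        (not_le.2 (lt_of_le_of_lt hr.1 hr1))
    exact lt_of_le_of_ne (hP1u r' (hsub hrm)) hne
  have hBle : k s ≤ min (x (sSup R') - hi (sSup R'))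
      (sInf ((fun r => x r - lo r) '' Icc (sSup R') s)) := by
    refine le_min ?_ ?_
    · have := hks (sSup R') ⟨le_rfl, hu₀m.2⟩
      linarith
    · apply le_csInf ((Set.nonempty_Icc.2 hu₀m.2).image _)
      rintro v ⟨r, hr, rfl⟩
      show k s ≤ x r - lo r
      have h1 := hks r hr
      have h2 := hP1l r (hsub ⟨le_trans hu₀m.1 hr.1, hr.2⟩)
      linarith
  have hbddA : BddAbove ((fun u => min (x u - hi u)
      (sInf ((fun r => x r - lo r) '' Icc u s))) '' Icc 0 s) := by
    refine ⟨k s, ?_⟩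
    rintro v ⟨u, hu, rfl⟩
    exact hA u hu
  apply le_antisymm
  · apply csSup_le ((Set.nonempty_Icc.2 hs0).image _)
    rintro v ⟨u, hu, rfl⟩
    exact hA u hu
  · exact hBle.trans (le_csSup hbddA ⟨sSup R', hu₀m, rfl⟩)

private lemma real_sInf_neg' (t : Set ℝ) : sInf (-t) = -sSup t := by
  rw [Real.sInf_def, neg_neg]

private lemma real_sSup_neg' (t : Set ℝ) : sSup (-t) = -sInf t := by
  have := Real.sInf_def t
  linarith

private lemma neg_image_eq (g : ℝ → ℝ) (S : Set ℝ) :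
    (fun r => -g r) '' S = -(g '' S) := by
  ext y
  simp only [Set.mem_image, Set.mem_neg]
  constructor
  · rintro ⟨r, hr, rfl⟩; exact ⟨r, hr, by ring⟩
  · rintro ⟨r, hr, hy⟩; exact ⟨r, hr, by linarith⟩

private lemma sInf_neg_image (g : ℝ → ℝ) (S : Set ℝ) :
    sInf ((fun r => -g r) '' S) = -sSup (g '' S) := by
  rw [neg_image_eq, real_sInf_neg']

private lemma sSup_neg_image (g : ℝ → ℝ) (S : Set ℝ) :
    sSup ((fun r => -g r) '' S) = -sInf (g '' S) := by
  rw [neg_image_eq, real_sSup_neg']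

private lemma keyMainNeg {T s : ℝ} {x k lo hi : ℝ → ℝ}
    (hs0 : 0 ≤ s) (hsT : s ≤ T)
    (hx : ContinuousOn x (Icc 0 T)) (hk : ContinuousOn k (Icc 0 T))
    (hlo : ContinuousOn lo (Icc 0 T)) (hhi : ContinuousOn hi (Icc 0 T))
    (hP1l : ∀ u ∈ Icc 0 T, lo u ≤ x u - k u)
    (hP1u : ∀ u ∈ Icc 0 T, x u - k u ≤ hi u)
    (hP2 : ∀ p q, 0 ≤ p → p ≤ q → q ≤ T →
      (∀ r, p < r → r < q → lo r < x r - k r) → k p ≤ k q)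
    (hP3 : ∀ p q, 0 ≤ p → p ≤ q → q ≤ T →
      (∀ r, p < r → r < q → x r - k r < hi r) → k q ≤ k p)
    (htouch : ∃ w ∈ Icc 0 s, x w - k w = lo w) :
    sInf ((fun u => max (x u - lo u)
      (sSup ((fun r => x r - hi r) '' Icc u s))) '' Icc 0 s) = k s := by
  obtain ⟨w, hw, hwt⟩ := htouch
  have hneg : sSup ((fun u => min (-x u - -lo u)
      (sInf ((fun r => -x r - -hi r) '' Icc u s))) '' Icc 0 s) = -k s :=
    keyMain (T := T) (s := s) (x := fun u => -x u) (k := fun u => -k u)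
      (lo := fun u => -hi u) (hi := fun u => -lo u) hs0 hsT hx.neg hk.neg hhi.neg hlo.neg
      (fun u hu => by have := hP1u u hu; linarith)
      (fun u hu => by have := hP1l u hu; linarith)
      (fun p q hp hpq hq hcond => by
        have h := hP3 p q hp hpq hq
          (fun r h1 h2 => by have := hcond r h1 h2; linarith)
        linarith)
      (fun p q hp hpq hq hcond => by
        have h := hP2 p q hp hpq hq
          (fun r h1 h2 => by have := hcond r h1 h2; linarith)
        linarith)
      ⟨w, hw, by linarith⟩
  have himg : (fun u => min (-x u - -lo u)
        (sInf ((fun r => -x r - -hi r) '' Icc u s))) '' Icc 0 s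
      = (fun u => -(max (x u - lo u) (sSup ((fun r => x r - hi r) '' Icc u s)))) '' Icc 0 s := by
    apply Set.image_congr
    intro u _
    have h1 : (fun r => -x r - -hi r) = fun r => -(x r - hi r) := by funext r; ring
    rw [h1, sInf_neg_image]
    have h2 : -x u - -lo u = -(x u - lo u) := by ring
    rw [h2, min_neg_neg]
  rw [himg, sSup_neg_image] at hneg
  linarith [hneg]

/-- Explicit Skorokhod-map representation of the constraining process `K = A - C`
of a (deterministic) doubly reflected path, in the alternative form of Slaby:
with the time-reversed free path `x(s) = Y(T-s) + (K(T-s) - K(T))` and reversed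
barriers `α̃(s) = α(T-s)`, `β̃(s) = β(T-s)`, first boundary-hitting times
`T_α̃`, `T_β̃` (valued in `EReal`, equal to `+∞` when the corresponding set is
empty), and the path functionals `H`, `L`, one has for every `s ∈ [0,T]`:
`K(T-s) - K(T) = 1_{T_β̃ < T_α̃} 1_{s ≥ T_β̃} H(s) + 1_{T_α̃ < T_β̃} 1_{s ≥ T_α̃} L(s)`. -/
theorem skorokhod_explicit_formula
    (T : ℝ) (hT : 0 < T)
    (α β Y : ℝ → ℝ)
    (hα : ContinuousOn α (Icc 0 T)) (hβ : ContinuousOn β (Icc 0 T))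
    (hsep : 0 < sInf ((fun t => β t - α t) '' Icc 0 T))
    (hY : ContinuousOn Y (Icc 0 T))
    (A C : StieltjesFunction ℝ)
    (hAc : Continuous (A : ℝ → ℝ)) (hCc : Continuous (C : ℝ → ℝ))
    (hA0 : A 0 = 0) (hC0 : C 0 = 0)
    (hbar : ∀ t ∈ Icc 0 T, α t ≤ Y t ∧ Y t ≤ β t)
    (hminA : ∫ t in Icc 0 T, (Y t - α t) ∂A.measure = 0)
    (hminC : ∫ t in Icc 0 T, (β t - Y t) ∂C.measure = 0)
    (K x αr βr : ℝ → ℝ)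
    (hK : ∀ t, K t = A t - C t)
    (hx : ∀ s, x s = Y (T - s) + (K (T - s) - K T))
    (hαr : ∀ s, αr s = α (T - s)) (hβr : ∀ s, βr s = β (T - s))
    (Tα Tβ : EReal)
    (hTα : Tα = sInf ((fun s : ℝ => (s : EReal)) '' {s ∈ Ioc 0 T | x s ≤ αr s}))
    (hTβ : Tβ = sInf ((fun s : ℝ => (s : EReal)) '' {s ∈ Ioc 0 T | βr s ≤ x s}))
    (H L : ℝ → ℝ)
    (hH : ∀ s, H s = sSup ((fun u => min (x u - βr u)
        (sInf ((fun r => x r - αr r) '' Icc u s))) '' Icc 0 s))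
    (hL : ∀ s, L s = sInf ((fun u => max (x u - αr u)
        (sSup ((fun r => x r - βr r) '' Icc u s))) '' Icc 0 s)) :
    ∀ s ∈ Icc 0 T,
      K (T - s) - K T =
        (if Tβ < Tα ∧ Tβ ≤ (s : EReal) then H s else 0) +
        (if Tα < Tβ ∧ Tα ≤ (s : EReal) then L s else 0) := by
  intro s hs
  -- gap between barriers
  have hgap : ∀ t ∈ Icc 0 T, α t < β t := by
    intro t ht
    have hb : BddBelow ((fun t => β t - α t) '' Icc 0 T) :=
      (isCompact_Icc.image_of_continuousOn (hβ.sub hα)).bddBelow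
    have h2 := csInf_le hb ⟨t, ht, rfl⟩
    dsimp only at h2
    linarith
  have hmapsTo : ∀ u ∈ Icc (0:ℝ) T, T - u ∈ Icc (0:ℝ) T := by
    intro u hu
    exact ⟨by linarith [hu.2], by linarith [hu.1]⟩
  set k : ℝ → ℝ := fun u => K (T - u) - K T with hk_def
  have hkeq : ∀ u, k u = (A (T - u) - C (T - u)) - (A T - C T) := by
    intro u; simp only [hk_def, hK]
  have hxk : ∀ u, x u - k u = Y (T - u) := by
    intro u
    have h1 : k u = K (T - u) - K T := rfl
    rw [hx u, h1]; ring
  have hkc : ContinuousOn k (Icc 0 T) := by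
    have hc : Continuous fun u : ℝ => (A (T - u) - C (T - u)) - (A T - C T) := by
      apply Continuous.sub _ continuous_const
      exact (hAc.comp (continuous_const.sub continuous_id)).sub
        (hCc.comp (continuous_const.sub continuous_id))
    exact hc.continuousOn.congr (fun u _ => hkeq u)
  have hYrc : ContinuousOn (fun u => Y (T - u)) (Icc 0 T) :=
    hY.comp ((continuous_const.sub continuous_id).continuousOn) hmapsTo
  have hxc : ContinuousOn x (Icc 0 T) := by
    apply (hYrc.add hkc).congr
    intro u _
    rw [hx u]; rfl
  have hαrc : ContinuousOn αr (Icc 0 T) :=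
    (hα.comp ((continuous_const.sub continuous_id).continuousOn) hmapsTo).congr
      (fun u _ => hαr u)
  have hβrc : ContinuousOn βr (Icc 0 T) :=
    (hβ.comp ((continuous_const.sub continuous_id).continuousOn) hmapsTo).congr
      (fun u _ => hβr u)
  have hP1l : ∀ u ∈ Icc 0 T, αr u ≤ x u - k u := by
    intro u hu; rw [hxk u, hαr u]; exact (hbar _ (hmapsTo u hu)).1
  have hP1u : ∀ u ∈ Icc 0 T, x u - k u ≤ βr u := by
    intro u hu; rw [hxk u, hβr u]; exact (hbar _ (hmapsTo u hu)).2
  have hconstA : ∀ p q, 0 ≤ p → p ≤ q → q ≤ T →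
      (∀ t, p < t → t < q → α t < Y t) → A q = A p := by
    intro p q hp hpq hq hpos
    exact stieltjes_const_of_pos A hAc T (fun t => Y t - α t) (hY.sub hα)
      (fun t ht => sub_nonneg.2 (hbar t ht).1) hminA p q hp hpq hq
      (fun t h1 h2 => sub_pos.2 (hpos t h1 h2))
  have hconstC : ∀ p q, 0 ≤ p → p ≤ q → q ≤ T →
      (∀ t, p < t → t < q → Y t < β t) → C q = C p := by
    intro p q hp hpq hq hpos
    exact stieltjes_const_of_pos C hCc T (fun t => β t - Y t) (hβ.sub hY)
      (fun t ht => sub_nonneg.2 (hbar t ht).2) hminC p q hp hpq hq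
      (fun t h1 h2 => sub_pos.2 (hpos t h1 h2))
  have hP2 : ∀ p q, 0 ≤ p → p ≤ q → q ≤ T →
      (∀ r, p < r → r < q → αr r < x r - k r) → k p ≤ k q := by
    intro p q hp hpq hq hcond
    have hA' : A (T - p) = A (T - q) := by
      apply hconstA (T - q) (T - p) (by linarith) (by linarith) (by linarith)
      intro t h1 h2
      have h := hcond (T - t) (by linarith) (by linarith)
      rw [hαr (T - t), hxk (T - t), sub_sub_cancel] at h
      exact h
    have hC' : C (T - q) ≤ C (T - p) := C.mono (by linarith)
    rw [hkeq p, hkeq q]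
    linarith [hA']
  have hP3 : ∀ p q, 0 ≤ p → p ≤ q → q ≤ T →
      (∀ r, p < r → r < q → x r - k r < βr r) → k q ≤ k p := by
    intro p q hp hpq hq hcond
    have hC' : C (T - p) = C (T - q) := by
      apply hconstC (T - q) (T - p) (by linarith) (by linarith) (by linarith)
      intro t h1 h2
      have h := hcond (T - t) (by linarith) (by linarith)
      rw [hβr (T - t), hxk (T - t), sub_sub_cancel] at h
      exact h
    have hA' : A (T - q) ≤ A (T - p) := A.mono (by linarith)
    rw [hkeq p, hkeq q]
    linarith [hC']
  have hmissα : ∀ z ∈ Icc (0:ℝ) T, (∀ u ∈ Ioc (0:ℝ) z, αr u < x u) → αr z < x z →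
      ∃ δ > 0, ((z + δ : ℝ) : EReal) ≤ Tα := by
    intro z hz h1 h2
    obtain ⟨δ, hδ, hb⟩ := miss_lemma (T := T) (f := fun u => x u - αr u)
      (hxc.sub hαrc) hz (fun u hu => sub_pos.2 (h1 u hu)) (sub_pos.2 h2)
    refine ⟨δ, hδ, ?_⟩
    rw [hTα]
    apply ereal_le_sInf
    intro u hu
    exact hb u ⟨hu.1, sub_nonpos.2 hu.2⟩
  have hmissβ : ∀ z ∈ Icc (0:ℝ) T, (∀ u ∈ Ioc (0:ℝ) z, x u < βr u) → x z < βr z →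
      ∃ δ > 0, ((z + δ : ℝ) : EReal) ≤ Tβ := by
    intro z hz h1 h2
    obtain ⟨δ, hδ, hb⟩ := miss_lemma (T := T) (f := fun u => βr u - x u)
      (hβrc.sub hxc) hz (fun u hu => sub_pos.2 (h1 u hu)) (sub_pos.2 h2)
    refine ⟨δ, hδ, ?_⟩
    rw [hTβ]
    apply ereal_le_sInf
    intro u hu
    exact hb u ⟨hu.1, sub_nonpos.2 hu.2⟩
  have hgoal : K (T - s) - K T = k s := rfl
  rw [hgoal]
  have h0T : (0:ℝ) ∈ Icc (0:ℝ) T := ⟨le_rfl, le_of_lt hT⟩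
  have hk00 : k 0 = 0 := by show K (T - 0) - K T = 0; rw [sub_zero, sub_self]
  have hgap0 : αr 0 < βr 0 := by rw [hαr, hβr]; exact hgap _ (hmapsTo 0 h0T)
  rcases eq_or_lt_of_le hs.1 with hs0 | hs0
  · -- s = 0
    subst hs0
    have hH0 : (if Tβ < Tα ∧ Tβ ≤ ((0:ℝ) : EReal) then H 0 else 0) = 0 := by
      split_ifs with hcond
      · have hxβ : βr 0 ≤ x 0 := by
          by_contra hb
          push_neg at hb
          obtain ⟨δ, hδ, hbd⟩ := hmissβ 0 h0T (fun u hu => absurd hu.2 (not_le.2 hu.1)) hb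
          exact absurd hcond.2
            (not_le.2 (lt_of_lt_of_le (EReal.coe_lt_coe_iff.2 (by linarith)) hbd))
        have hxβ' : x 0 = βr 0 := by
          have h2 := hP1u 0 h0T
          linarith [hk00]
        rw [hH 0]
        simp only [Set.Icc_self, Set.image_singleton, csSup_singleton, csInf_singleton]
        rw [min_eq_left (by linarith [hgap0])]
        linarith
      · rfl
    have hL0 : (if Tα < Tβ ∧ Tα ≤ ((0:ℝ) : EReal) then L 0 else 0) = 0 := by
      split_ifs with hcond
      · have hxα : x 0 ≤ αr 0 := by
          by_contra hb
          push_neg at hb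
          obtain ⟨δ, hδ, hbd⟩ := hmissα 0 h0T (fun u hu => absurd hu.2 (not_le.2 hu.1)) hb
          exact absurd hcond.2
            (not_le.2 (lt_of_lt_of_le (EReal.coe_lt_coe_iff.2 (by linarith)) hbd))
        have hxα' : x 0 = αr 0 := by
          have h2 := hP1l 0 h0T
          linarith [hk00]
        rw [hL 0]
        simp only [Set.Icc_self, Set.image_singleton, csInf_singleton, csSup_singleton]
        rw [max_eq_left (by linarith [hgap0])]
        linarith
      · rfl
    rw [hH0, hL0, hk00]
    norm_num
  · -- 0 < s
    set Et := {u ∈ Ioc 0 s | x u - k u = αr u ∨ x u - k u = βr u} with hEt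
    have hsubs : Icc 0 s ⊆ Icc 0 T := Icc_subset_Icc le_rfl hs.2
    have hkzero : ∀ u ∈ Icc 0 s,
        (∀ r, 0 < r → r < u → ¬(x r - k r = αr r ∨ x r - k r = βr r)) → k u = 0 := by
      intro u hu hno
      have hA' : A T = A (T - u) := by
        apply hconstA (T - u) T (by linarith [hu.2, hs.2]) (by linarith [hu.1]) le_rfl
        intro t h1 h2
        have hnt := hno (T - t) (by linarith) (by linarith)
        push_neg at hnt
        have hl := hP1l (T - t) ⟨by linarith, by linarith [hu.1, hu.2, hs.2]⟩
        have hlt := lt_of_le_of_ne hl (Ne.symm hnt.1)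
        rw [hαr (T - t), hxk (T - t), sub_sub_cancel] at hlt
        exact hlt
      have hC' : C T = C (T - u) := by
        apply hconstC (T - u) T (by linarith [hu.2, hs.2]) (by linarith [hu.1]) le_rfl
        intro t h1 h2
        have hnt := hno (T - t) (by linarith) (by linarith)
        push_neg at hnt
        have hl := hP1u (T - t) ⟨by linarith, by linarith [hu.1, hu.2, hs.2]⟩
        have hlt := lt_of_le_of_ne hl hnt.2
        rw [hβr (T - t), hxk (T - t), sub_sub_cancel] at hlt
        exact hlt
      rw [hkeq u]
      linarith
    rcases Set.eq_empty_or_nonempty Et with hEe | hEne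
    · -- no touches: k s = 0 and no hitting times up to s
      have hnot : ∀ u ∈ Ioc (0:ℝ) s, ¬(x u - k u = αr u ∨ x u - k u = βr u) := by
        intro u hu hc
        have hmem : u ∈ Et := ⟨hu, hc⟩
        rw [hEe] at hmem
        exact absurd hmem (Set.notMem_empty u)
      have hks0 : k s = 0 := hkzero s ⟨hs.1, le_rfl⟩
        (fun r h1 h2 => hnot r ⟨h1, le_of_lt h2⟩)
      have hstrict : ∀ u ∈ Ioc (0:ℝ) s, αr u < x u ∧ x u < βr u := by
        intro u hu
        have huT : u ∈ Icc 0 T := ⟨le_of_lt hu.1, le_trans hu.2 hs.2⟩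
        have hku : k u = 0 := hkzero u ⟨le_of_lt hu.1, hu.2⟩
          (fun r h1 h2 => hnot r ⟨h1, le_of_lt (lt_of_lt_of_le h2 hu.2)⟩)
        have hnu := hnot u hu
        push_neg at hnu
        have h1 := lt_of_le_of_ne (hP1l u huT) (Ne.symm hnu.1)
        have h2 := lt_of_le_of_ne (hP1u u huT) hnu.2
        constructor <;> linarith
      have hsT' : s ∈ Icc (0:ℝ) T := hs
      obtain ⟨δa, hδa, hba⟩ := hmissα s hsT' (fun u hu => (hstrict u hu).1)
        ((hstrict s ⟨hs0, le_rfl⟩).1)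
      obtain ⟨δb, hδb, hbb⟩ := hmissβ s hsT' (fun u hu => (hstrict u hu).2)
        ((hstrict s ⟨hs0, le_rfl⟩).2)
      have hTαgt : (s : EReal) < Tα :=
        lt_of_lt_of_le (EReal.coe_lt_coe_iff.2 (by linarith)) hba
      have hTβgt : (s : EReal) < Tβ :=
        lt_of_lt_of_le (EReal.coe_lt_coe_iff.2 (by linarith)) hbb
      rw [if_neg (fun hc => absurd hc.2 (not_le.2 hTβgt)),
        if_neg (fun hc => absurd hc.2 (not_le.2 hTαgt)), hks0]
      norm_num
    · -- touches exist in (0, s]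
      have hbddE : BddBelow Et := ⟨0, fun u hu => le_of_lt hu.1.1⟩
      have hEcl : IsClosed {u ∈ Icc 0 s | x u - k u = αr u ∨ x u - k u = βr u} := by
        have hsplit : {u ∈ Icc 0 s | x u - k u = αr u ∨ x u - k u = βr u} =
            {u ∈ Icc 0 s | x u - k u = αr u} ∪ {u ∈ Icc 0 s | x u - k u = βr u} := by
          ext u
          simp only [Set.mem_sep_iff, Set.mem_union]
          tauto
        rw [hsplit]
        exact (isClosed_sep' ((hxc.sub hkc).mono hsubs) (hαrc.mono hsubs)).union
          (isClosed_sep' ((hxc.sub hkc).mono hsubs) (hβrc.mono hsubs))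
      have hτcl : sInf Et ∈ {u ∈ Icc 0 s | x u - k u = αr u ∨ x u - k u = βr u} := by
        have h1 : sInf Et ∈ closure Et := csInf_mem_closure hEne hbddE
        have h2 : Et ⊆ {u ∈ Icc 0 s | x u - k u = αr u ∨ x u - k u = βr u} :=
          fun u hu => ⟨⟨le_of_lt hu.1.1, hu.1.2⟩, hu.2⟩
        exact hEcl.closure_subset_iff.2 h2 h1
      set τ := sInf Et with hτdef
      obtain ⟨hτIcc, hτtouch⟩ := hτcl
      have hτT : τ ∈ Icc 0 T := hsubs hτIcc
      have hgapτ : αr τ < βr τ := by rw [hαr, hβr]; exact hgap _ (hmapsTo τ hτT)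
      rcases eq_or_lt_of_le hτIcc.1 with hτ0 | hτpos
      · -- τ = 0 : touches accumulate at 0
        rw [← hτ0] at hτtouch
        rcases hτtouch with h0α | h0β
        · -- lower touch at 0 : L-regime
          have hg0 : 0 < βr 0 - (x 0 - k 0) := by rw [h0α]; linarith
          have hgc : ContinuousOn (fun u => βr u - (x u - k u)) (Icc 0 T) :=
            hβrc.sub (hxc.sub hkc)
          have hev : (fun u => βr u - (x u - k u)) ⁻¹' (Ioi 0) ∈ 𝓝[Icc (0:ℝ) T] 0 :=
            (hgc 0 h0T) (isOpen_Ioi.mem_nhds hg0)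
          rw [Metric.mem_nhdsWithin_iff] at hev
          obtain ⟨δ₀, hδ₀, hball⟩ := hev
          set η := min (δ₀ / 2) s with hη
          have hηpos : 0 < η := lt_min (by linarith) hs0
          have hηs : η ≤ s := min_le_right _ _
          have hηball : ∀ u ∈ Icc (0:ℝ) η, 0 < βr u - (x u - k u) := by
            intro u hu
            refine hball ⟨?_, hu.1, le_trans hu.2 (le_trans hηs hs.2)⟩
            rw [Metric.mem_ball, Real.dist_eq, sub_zero, abs_of_nonneg hu.1]
            exact lt_of_le_of_lt hu.2 (lt_of_le_of_lt (min_le_left _ _) (by linarith))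
          have hknp : ∀ u ∈ Icc (0:ℝ) η, k u ≤ 0 := by
            intro u hu
            have hC' : C T = C (T - u) := by
              apply hconstC (T - u) T
                (by linarith [hu.2, hηs, hs.2]) (by linarith [hu.1]) le_rfl
              intro t h1 h2
              have hgt := hηball (T - t) ⟨by linarith, by linarith [hu.2]⟩
              rw [hβr (T - t), hxk (T - t), sub_sub_cancel] at hgt
              linarith
            have hA'' : A (T - u) ≤ A T := A.mono (by linarith [hu.1])
            rw [hkeq u]
            linarith
          obtain ⟨δb, hδb, hbb⟩ := hmissβ 0 h0T
            (fun u hu => absurd hu.2 (not_le.2 hu.1))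
            (by linarith [hk00])
          have hlt : sInf Et < min η δb := by
            rw [← hτdef, ← hτ0]
            exact lt_min hηpos hδb
          obtain ⟨u₀, hu₀E, hu₀lt⟩ := (csInf_lt_iff hbddE hEne).1 hlt
          have hu₀η : u₀ ∈ Icc (0:ℝ) η :=
            ⟨le_of_lt hu₀E.1.1, le_of_lt (lt_of_lt_of_le hu₀lt (min_le_left _ _))⟩
          have hu₀α : x u₀ - k u₀ = αr u₀ := by
            rcases hu₀E.2 with h | h
            · exact h
            · exact absurd h (by have := hηball u₀ hu₀η; intro heq; linarith)
          have hu₀Sα : x u₀ ≤ αr u₀ := by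
            have := hknp u₀ hu₀η
            linarith
          have hTαle : Tα ≤ (u₀ : EReal) := by
            rw [hTα]
            exact sInf_le ⟨u₀, ⟨⟨hu₀E.1.1, le_trans hu₀E.1.2 hs.2⟩, hu₀Sα⟩, rfl⟩
          have hTβgt : (u₀ : EReal) < Tβ := by
            refine lt_of_lt_of_le (EReal.coe_lt_coe_iff.2 ?_) hbb
            have := lt_of_lt_of_le hu₀lt (min_le_right _ _)
            linarith
          have hcond2 : Tα < Tβ ∧ Tα ≤ (s : EReal) :=
            ⟨lt_of_le_of_lt hTαle hTβgt,
             le_trans hTαle (EReal.coe_le_coe_iff.2 hu₀E.1.2)⟩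
          rw [if_neg (fun hc => absurd hcond2.1 (not_lt.2 (le_of_lt hc.1))),
            if_pos hcond2, zero_add, hL s]
          exact (keyMainNeg hs.1 hs.2 hxc hkc hαrc hβrc hP1l hP1u hP2 hP3
            ⟨u₀, ⟨le_of_lt hu₀E.1.1, hu₀E.1.2⟩, hu₀α⟩).symm
        · -- upper touch at 0 : H-regime
          have hg0 : 0 < (x 0 - k 0) - αr 0 := by rw [h0β]; linarith
          have hgc : ContinuousOn (fun u => (x u - k u) - αr u) (Icc 0 T) :=
            (hxc.sub hkc).sub hαrc
          have hev : (fun u => (x u - k u) - αr u) ⁻¹' (Ioi 0) ∈ 𝓝[Icc (0:ℝ) T] 0 :=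
            (hgc 0 h0T) (isOpen_Ioi.mem_nhds hg0)
          rw [Metric.mem_nhdsWithin_iff] at hev
          obtain ⟨δ₀, hδ₀, hball⟩ := hev
          set η := min (δ₀ / 2) s with hη
          have hηpos : 0 < η := lt_min (by linarith) hs0
          have hηs : η ≤ s := min_le_right _ _
          have hηball : ∀ u ∈ Icc (0:ℝ) η, 0 < (x u - k u) - αr u := by
            intro u hu
            refine hball ⟨?_, hu.1, le_trans hu.2 (le_trans hηs hs.2)⟩
            rw [Metric.mem_ball, Real.dist_eq, sub_zero, abs_of_nonneg hu.1]
            exact lt_of_le_of_lt hu.2 (lt_of_le_of_lt (min_le_left _ _) (by linarith))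
          have hknp : ∀ u ∈ Icc (0:ℝ) η, 0 ≤ k u := by
            intro u hu
            have hA' : A T = A (T - u) := by
              apply hconstA (T - u) T
                (by linarith [hu.2, hηs, hs.2]) (by linarith [hu.1]) le_rfl
              intro t h1 h2
              have hgt := hηball (T - t) ⟨by linarith, by linarith [hu.2]⟩
              rw [hαr (T - t), hxk (T - t), sub_sub_cancel] at hgt
              linarith
            have hC'' : C (T - u) ≤ C T := C.mono (by linarith [hu.1])
            rw [hkeq u]
            linarith
          obtain ⟨δa, hδa, hba⟩ := hmissα 0 h0T
            (fun u hu => absurd hu.2 (not_le.2 hu.1))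
            (by linarith [hk00])
          have hlt : sInf Et < min η δa := by
            rw [← hτdef, ← hτ0]
            exact lt_min hηpos hδa
          obtain ⟨u₀, hu₀E, hu₀lt⟩ := (csInf_lt_iff hbddE hEne).1 hlt
          have hu₀η : u₀ ∈ Icc (0:ℝ) η :=
            ⟨le_of_lt hu₀E.1.1, le_of_lt (lt_of_lt_of_le hu₀lt (min_le_left _ _))⟩
          have hu₀β : x u₀ - k u₀ = βr u₀ := by
            rcases hu₀E.2 with h | h
            · exact absurd h (by have := hηball u₀ hu₀η; intro heq; linarith)
            · exact h
          have hu₀Sβ : βr u₀ ≤ x u₀ := by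
            have := hknp u₀ hu₀η
            linarith
          have hTβle : Tβ ≤ (u₀ : EReal) := by
            rw [hTβ]
            exact sInf_le ⟨u₀, ⟨⟨hu₀E.1.1, le_trans hu₀E.1.2 hs.2⟩, hu₀Sβ⟩, rfl⟩
          have hTαgt : (u₀ : EReal) < Tα := by
            refine lt_of_lt_of_le (EReal.coe_lt_coe_iff.2 ?_) hba
            have := lt_of_lt_of_le hu₀lt (min_le_right _ _)
            linarith
          have hcond1 : Tβ < Tα ∧ Tβ ≤ (s : EReal) :=
            ⟨lt_of_le_of_lt hTβle hTαgt,
             le_trans hTβle (EReal.coe_le_coe_iff.2 hu₀E.1.2)⟩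
          rw [if_pos hcond1, if_neg (fun hc => absurd hcond1.1 (not_lt.2 (le_of_lt hc.1))),
            add_zero, hH s]
          exact (keyMain hs.1 hs.2 hxc hkc hαrc hβrc hP1l hP1u hP2 hP3
            ⟨u₀, ⟨le_of_lt hu₀E.1.1, hu₀E.1.2⟩, hu₀β⟩).symm
      · -- τ > 0 : no touch before τ
        have hnoτ : ∀ r, 0 < r → r < τ → ¬(x r - k r = αr r ∨ x r - k r = βr r) := by
          intro r h1 h2 hc
          have hmem : r ∈ Et := ⟨⟨h1, le_trans (le_of_lt h2) hτIcc.2⟩, hc⟩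
          exact absurd (csInf_le hbddE hmem) (not_le.2 h2)
        have hkτ : ∀ u ∈ Icc (0:ℝ) τ, k u = 0 := fun u hu =>
          hkzero u ⟨hu.1, le_trans hu.2 hτIcc.2⟩
            (fun r hr1 hr2 => hnoτ r hr1 (lt_of_lt_of_le hr2 hu.2))
        have hstrictτ : ∀ u, 0 < u → u < τ → αr u < x u ∧ x u < βr u := by
          intro u h1 h2
          have huT : u ∈ Icc 0 T := ⟨le_of_lt h1, le_trans (le_of_lt h2) hτT.2⟩
          have hku : k u = 0 := hkτ u ⟨le_of_lt h1, le_of_lt h2⟩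
          have hnu := hnoτ u h1 h2
          push_neg at hnu
          have ha := lt_of_le_of_ne (hP1l u huT) (Ne.symm hnu.1)
          have hb := lt_of_le_of_ne (hP1u u huT) hnu.2
          constructor <;> linarith
        have hkτ0 : k τ = 0 := hkτ τ ⟨hτT.1, le_rfl⟩
        rcases hτtouch with hτα | hτβ
        · -- α-touch at τ : L-regime
          have hxτ : x τ = αr τ := by linarith [hτα, hkτ0]
          have hTαle : Tα ≤ (τ : EReal) := by
            rw [hTα]
            exact sInf_le ⟨τ, ⟨⟨hτpos, le_trans hτIcc.2 hs.2⟩, le_of_eq hxτ⟩, rfl⟩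
          obtain ⟨δ, hδ, hb⟩ := hmissβ τ hτT
            (fun u hu => by
              rcases lt_or_eq_of_le hu.2 with h | h
              · exact (hstrictτ u hu.1 h).2
              · rw [h]; linarith [hxτ, hgapτ])
            (by linarith [hxτ, hgapτ])
          have hTβgt : (τ : EReal) < Tβ :=
            lt_of_lt_of_le (EReal.coe_lt_coe_iff.2 (by linarith)) hb
          have hcond2 : Tα < Tβ ∧ Tα ≤ (s : EReal) :=
            ⟨lt_of_le_of_lt hTαle hTβgt,
             le_trans hTαle (EReal.coe_le_coe_iff.2 hτIcc.2)⟩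
          rw [if_neg (fun hc => absurd hcond2.1 (not_lt.2 (le_of_lt hc.1))),
            if_pos hcond2, zero_add, hL s]
          exact (keyMainNeg hs.1 hs.2 hxc hkc hαrc hβrc hP1l hP1u hP2 hP3
            ⟨τ, hτIcc, hτα⟩).symm
        · -- β-touch at τ : H-regime
          have hxτ : x τ = βr τ := by linarith [hτβ, hkτ0]
          have hTβle : Tβ ≤ (τ : EReal) := by
            rw [hTβ]
            exact sInf_le ⟨τ, ⟨⟨hτpos, le_trans hτIcc.2 hs.2⟩, le_of_eq hxτ.symm⟩, rfl⟩
          obtain ⟨δ, hδ, hb⟩ := hmissα τ hτT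
            (fun u hu => by
              rcases lt_or_eq_of_le hu.2 with h | h
              · exact (hstrictτ u hu.1 h).1
              · rw [h]; linarith [hxτ, hgapτ])
            (by linarith [hxτ, hgapτ])
          have hTαgt : (τ : EReal) < Tα :=
            lt_of_lt_of_le (EReal.coe_lt_coe_iff.2 (by linarith)) hb
          have hcond1 : Tβ < Tα ∧ Tβ ≤ (s : EReal) :=
            ⟨lt_of_le_of_lt hTβle hTαgt,
             le_trans hTβle (EReal.coe_le_coe_iff.2 hτIcc.2)⟩
          rw [if_pos hcond1, if_neg (fun hc => absurd hcond1.1 (not_lt.2 (le_of_lt hc.1))),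
            add_zero, hH s]
          exact (keyMain hs.1 hs.2 hxc hkc hαrc hβrc hP1l hP1u hP2 hP3
            ⟨τ, hτIcc, hτβ⟩).symm
end
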